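/- Let T be a two-layer subposet of the Boolean lattice (upper layer: sets of cardinality ℓ; lower layer: sets of cardinality ℓ−1, ordered by inclusion). If T is closed under intersection (for any two distinct upper nodes x, x', the set x ∩ x' belongs to the lower layer) and balanced (all upper nodes have the same number of successors), then T is regular (n_x is the same function for all upper nodes x). -/
import Mathlib


variable {N : Type*} [DecidableEq N]

/-- Predecessors of a lower node `y`: upper nodes strictly containing `y`. -/
def precs (Upper : Finset (Finset N)) (y : Finset N) : Finset (Finset N) :=
  Upper.filter fun x => y ⊂ x

/-- `f_x(y) = |prec(y)|` if `y ∈ succ(x)`, and `0` otherwise. -/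
def fx (Upper : Finset (Finset N)) (x y : Finset N) : ℕ :=
  if y ⊂ x then (precs Upper y).card else 0

/-- `n_x(r)` is the number of lower nodes `y` with `f_x(y) = r`. -/
def nx (Upper Lower : Finset (Finset N)) (x : Finset N) (r : ℕ) : ℕ :=
  (Lower.filter fun y => fx Upper x y = r).card

/-- If a two-layer subposet of the Boolean lattice is closed under intersection and
balanced, then it is regular: `n_x` is the same function for all upper nodes `x`. -/
theorem closed_balanced_implies_regular (Upper Lower : Finset (Finset N)) (ℓ : ℕ)
    (hℓ : 2 ≤ ℓ)
    (hU : ∀ x ∈ Upper, x.card = ℓ) (hL : ∀ y ∈ Lower, y.card = ℓ - 1)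
    (hclosed : ∀ x ∈ Upper, ∀ x' ∈ Upper, x ≠ x' → x ∩ x' ∈ Lower)
    (hbal : ∀ x ∈ Upper, ∀ x' ∈ Upper,
      (Lower.filter fun y => y ⊂ x).card = (Lower.filter fun y => y ⊂ x').card) :
    ∀ x ∈ Upper, ∀ x' ∈ Upper, ∀ r, nx Upper Lower x r = nx Upper Lower x' r := by
  -- basic facts
  have hss : ∀ z ∈ Upper, ∀ y ∈ Lower, (y ⊂ z ↔ y ⊆ z) := by
    intro z hz y hy
    constructor
    · exact fun h => h.subset
    · intro h
      refine Finset.ssubset_iff_subset_ne.2 ⟨h, fun e => ?_⟩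
      have := hL y hy; rw [e, hU z hz] at this; omega
  have hC : ∀ z ∈ Upper, ∀ w ∈ Upper, z ≠ w → ∀ y ∈ Lower, y ⊂ z → y ⊂ w → y = z ∩ w := by
    intro z hz w hw hzw y hy h1 h2
    have hmem := hclosed z hz w hw hzw
    exact Finset.eq_of_subset_of_card_le (Finset.subset_inter h1.subset h2.subset)
      (by rw [hL _ hmem, hL y hy])
  have hmemprec : ∀ z ∈ Upper, ∀ y, y ⊂ z → z ∈ precs Upper y :=
    fun z hz y h => Finset.mem_filter.2 ⟨hz, h⟩
  have hfx : ∀ z y : Finset N, y ⊂ z → fx Upper z y = (precs Upper y).card :=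
    fun z y h => if_pos h
  have hfx0 : ∀ z y : Finset N, ¬ y ⊂ z → fx Upper z y = 0 := fun z y h => if_neg h
  have hpos : ∀ z ∈ Upper, ∀ y, y ⊂ z → 1 ≤ (precs Upper y).card :=
    fun z hz y h => Finset.card_pos.2 ⟨z, hmemprec z hz y h⟩
  -- key lemma: a lower node with ≥ 3 predecessors is contained in every upper node
  have hK : ∀ y ∈ Lower, 3 ≤ (precs Upper y).card → ∀ z ∈ Upper, y ⊂ z := by
    intro y hy h3 z hz
    by_contra hns
    have hys : ¬ y ⊆ z := fun h => hns ((hss z hz y hy).2 h)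
    have hzy : (z ∩ y).card ≤ ℓ - 2 := by
      have hsub : z ∩ y ⊂ y :=
        Finset.ssubset_iff_subset_ne.2 ⟨Finset.inter_subset_right,
          fun e => hys (by rw [← e]; exact Finset.inter_subset_left)⟩
      have := Finset.card_lt_card hsub
      rw [hL y hy] at this; omega
    have hA : ∀ w ∈ precs Upper y, ∃ a, a ∈ z ∧ a ∉ y ∧ w = y ∪ {a} ∧ (z ∩ y).card = ℓ - 2 := by
      intro w hw
      obtain ⟨hwU, hyw⟩ := Finset.mem_filter.1 hw
      have hcw : (w \ y).card = 1 := by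
        rw [Finset.card_sdiff_of_subset hyw.subset, hU w hwU, hL y hy]; omega
      obtain ⟨a, ha⟩ := Finset.card_eq_one.1 hcw
      have hany : a ∉ y := by
        have : a ∈ w \ y := ha ▸ Finset.mem_singleton_self a
        exact (Finset.mem_sdiff.1 this).2
      have hwe : w = y ∪ {a} := by
        rw [← ha, Finset.union_sdiff_of_subset hyw.subset]
      have hzw : z ≠ w := fun e => hns (e ▸ hyw)
      have hzwL := hclosed z hz w hwU hzw
      have hcard : (z ∩ w).card = ℓ - 1 := hL _ hzwL
      have hdistr : z ∩ w = (z ∩ y) ∪ (z ∩ {a}) := by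
        rw [hwe, Finset.inter_union_distrib_left]
      have haz : a ∈ z := by
        by_contra haz
        have : z ∩ {a} = ∅ := by
          simp [Finset.eq_empty_iff_forall_notMem, haz]
        rw [this, Finset.union_empty] at hdistr
        rw [hdistr] at hcard; omega
      have hza : z ∩ {a} = {a} := by
        simp [Finset.inter_eq_right.2, haz]
      rw [hza] at hdistr
      have hanzy : a ∉ z ∩ y := fun h => hany (Finset.mem_inter.1 h).2
      have : (z ∩ w).card = (z ∩ y).card + 1 := by
        rw [hdistr, Finset.union_comm, ← Finset.insert_eq, Finset.card_insert_of_notMem hanzy]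
      exact ⟨a, haz, hany, hwe, by omega⟩
    obtain ⟨x1, x2, x3, hx1, hx2, hx3, h12, h13, h23⟩ :=
      Finset.two_lt_card_iff.1 (by omega : 2 < (precs Upper y).card)
    obtain ⟨a1, ha1z, ha1y, he1, hc⟩ := hA x1 hx1
    obtain ⟨a2, ha2z, ha2y, he2, -⟩ := hA x2 hx2
    obtain ⟨a3, ha3z, ha3y, he3, -⟩ := hA x3 hx3
    have hne12 : a1 ≠ a2 := fun e => h12 (by rw [he1, he2, e])
    have hne13 : a1 ≠ a3 := fun e => h13 (by rw [he1, he3, e])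
    have hne23 : a2 ≠ a3 := fun e => h23 (by rw [he2, he3, e])
    have hsub : (z ∩ y) ∪ {a1, a2, a3} ⊆ z := by
      intro b hb
      rcases Finset.mem_union.1 hb with h | h
      · exact (Finset.mem_inter.1 h).1
      · simp only [Finset.mem_insert, Finset.mem_singleton] at h
        rcases h with rfl | rfl | rfl <;> assumption
    have hdisj : Disjoint (z ∩ y) ({a1, a2, a3} : Finset N) := by
      rw [Finset.disjoint_right]
      intro b hb hb'
      simp only [Finset.mem_insert, Finset.mem_singleton] at hb
      rcases hb with rfl | rfl | rfl <;>
        exact (by assumption : b ∉ y) (Finset.mem_inter.1 hb').2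
    have hc3 : ({a1, a2, a3} : Finset N).card = 3 := by
      rw [Finset.card_insert_of_notMem (by simp [hne12, hne13]),
        Finset.card_insert_of_notMem (by simp [hne23]), Finset.card_singleton]
    have := Finset.card_le_card hsub
    rw [Finset.card_union_of_disjoint hdisj, hc3, hU z hz, hc] at this
    omega
  intro x hx x' hx' r
  by_cases hxx : x = x'
  · subst hxx; rfl
  have hm2 : 2 ≤ Upper.card := Finset.one_lt_card_iff.2 ⟨x, x', hx, hx', hxx⟩
  -- zero case, handled uniformly
  have hzero : ∀ z ∈ Upper, (Lower.filter fun y => fx Upper z y = 0)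
      = Lower.filter fun y => ¬ y ⊂ z := by
    intro z hz
    apply Finset.filter_congr
    intro y _
    constructor
    · intro h hc
      have := hpos z hz y hc
      rw [hfx z y hc] at h; omega
    · exact fun h => hfx0 z y h
  by_cases hr0 : r = 0
  · subst hr0
    unfold nx
    rw [hzero x hx, hzero x' hx']
    have e1 := Finset.card_filter_add_card_filter_not (s := Lower)
      (p := fun y => y ⊂ x)
    have e2 := Finset.card_filter_add_card_filter_not (s := Lower)
      (p := fun y => y ⊂ x')
    have := hbal x hx x' hx'
    omega
  by_cases hex : ∃ y0 ∈ Lower, 3 ≤ (precs Upper y0).card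
  · -- sunflower case
    obtain ⟨y0, hy0, h3⟩ := hex
    have hcore : ∀ z ∈ Upper, y0 ⊂ z := hK y0 hy0 h3
    have hprecy0 : precs Upper y0 = Upper := Finset.filter_true_of_mem hcore
    rw [hprecy0] at h3
    have huniq : ∀ z ∈ Upper, ∀ y ∈ Lower, y ⊂ z → y ≠ y0 → precs Upper y = {z} := by
      intro z hz y hy hyz hne
      apply Finset.eq_singleton_iff_unique_mem.2
      refine ⟨hmemprec z hz y hyz, fun w hw => ?_⟩
      obtain ⟨hwU, hyw⟩ := Finset.mem_filter.1 hw
      by_contra hwz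
      have heq : y = z ∩ w := hC z hz w hwU (Ne.symm hwz) y hy hyz hyw
      have hy0sub : y0 ⊆ z ∩ w :=
        Finset.subset_inter (hcore z hz).subset (hcore w hwU).subset
      rw [← heq] at hy0sub
      exact hne (Finset.eq_of_subset_of_card_le hy0sub (by rw [hL y hy, hL y0 hy0])).symm
    have hval : ∀ z ∈ Upper, ∀ y ∈ Lower,
        fx Upper z y = if y = y0 then Upper.card else if y ⊂ z then 1 else 0 := by
      intro z hz y hy
      by_cases h1 : y = y0
      · subst h1
        rw [if_pos rfl, hfx z y (hcore z hz), hprecy0]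
      · rw [if_neg h1]
        by_cases h2 : y ⊂ z
        · rw [if_pos h2, hfx z y h2, huniq z hz y hy h2 h1, Finset.card_singleton]
        · rw [if_neg h2, hfx0 z y h2]
    have hrew : ∀ z ∈ Upper, (Lower.filter fun y => fx Upper z y = r)
        = Lower.filter fun y => (if y = y0 then Upper.card else if y ⊂ z then 1 else 0) = r := by
      intro z hz
      exact Finset.filter_congr fun y hy => by rw [hval z hz y hy]
    unfold nx
    rw [hrew x hx, hrew x' hx']
    by_cases hrm : r = Upper.card
    · subst hrm
      have hone : ∀ z ∈ Upper, (Lower.filter fun y =>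
          (if y = y0 then Upper.card else if y ⊂ z then 1 else 0) = Upper.card) = {y0} := by
        intro z hz
        ext y
        simp only [Finset.mem_filter, Finset.mem_singleton]
        constructor
        · rintro ⟨hyL, hv⟩
          by_contra hne
          rw [if_neg hne] at hv
          split_ifs at hv <;> omega
        · rintro rfl
          exact ⟨hy0, by rw [if_pos rfl]⟩
      rw [hone x hx, hone x' hx']
    by_cases hr1 : r = 1
    · subst hr1
      have hone : ∀ z ∈ Upper, (Lower.filter fun y =>
          (if y = y0 then Upper.card else if y ⊂ z then 1 else 0) = 1)
          = (Lower.filter fun y => y ⊂ z).erase y0 := by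
        intro z hz
        ext y
        simp only [Finset.mem_filter, Finset.mem_erase]
        constructor
        · rintro ⟨hyL, hv⟩
          have hne : y ≠ y0 := by rintro rfl; rw [if_pos rfl] at hv; omega
          rw [if_neg hne] at hv
          by_cases h : y ⊂ z
          · exact ⟨hne, hyL, h⟩
          · rw [if_neg h] at hv; omega
        · rintro ⟨hne, hyL, hyz⟩
          rw [if_neg hne, if_pos hyz]
          exact ⟨hyL, rfl⟩
      have m1 : y0 ∈ Lower.filter fun y => y ⊂ x := Finset.mem_filter.2 ⟨hy0, hcore x hx⟩
      have m2 : y0 ∈ Lower.filter fun y => y ⊂ x' := Finset.mem_filter.2 ⟨hy0, hcore x' hx'⟩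
      rw [hone x hx, hone x' hx', Finset.card_erase_of_mem m1,
        Finset.card_erase_of_mem m2, hbal x hx x' hx']
    · -- r not 0, 1, m : empty
      have hone : ∀ z ∈ Upper, (Lower.filter fun y =>
          (if y = y0 then Upper.card else if y ⊂ z then 1 else 0) = r) = ∅ := by
        intro z hz
        rw [Finset.filter_eq_empty_iff]
        intro y hy hv
        split_ifs at hv <;> omega
      rw [hone x hx, hone x' hx']
  · -- all precs ≤ 2
    push_neg at hex
    have h2 : ∀ y ∈ Lower, (precs Upper y).card ≤ 2 := fun y hy => by
      have := hex y hy; omega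
    have hfilter2 : ∀ z ∈ Upper, (Lower.filter fun y => fx Upper z y = 2)
        = (Upper.erase z).image (z ∩ ·) := by
      intro z hz
      ext y
      simp only [Finset.mem_filter, Finset.mem_image, Finset.mem_erase]
      constructor
      · rintro ⟨hyL, hv⟩
        have hyz : y ⊂ z := by
          by_contra h; rw [hfx0 z y h] at hv; omega
        rw [hfx z y hyz] at hv
        have hzmem := hmemprec z hz y hyz
        have : ((precs Upper y).erase z).Nonempty := by
          rw [← Finset.card_pos, Finset.card_erase_of_mem hzmem]; omega
        obtain ⟨w, hw⟩ := this
        have hwz : w ≠ z := (Finset.mem_erase.1 hw).1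
        obtain ⟨hwU, hyw⟩ := Finset.mem_filter.1 (Finset.mem_of_mem_erase hw)
        exact ⟨w, ⟨hwz, hwU⟩, (hC z hz w hwU (Ne.symm hwz) y hyL hyz hyw).symm⟩
      · rintro ⟨w, ⟨hwz, hwU⟩, rfl⟩
        have hyL := hclosed z hz w hwU (Ne.symm hwz)
        have hyz : z ∩ w ⊂ z := (hss z hz _ hyL).2 Finset.inter_subset_left
        have hyw : z ∩ w ⊂ w := (hss w hwU _ hyL).2 Finset.inter_subset_right
        refine ⟨hyL, ?_⟩
        rw [hfx z _ hyz]
        have hle := h2 _ hyL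
        have hge : 1 < (precs Upper (z ∩ w)).card :=
          Finset.one_lt_card_iff.2 ⟨z, w, hmemprec z hz _ hyz, hmemprec w hwU _ hyw, Ne.symm hwz⟩
        omega
    have hcard2 : ∀ z ∈ Upper, nx Upper Lower z 2 = Upper.card - 1 := by
      intro z hz
      unfold nx
      rw [hfilter2 z hz, Finset.card_image_of_injOn, Finset.card_erase_of_mem hz]
      intro w1 hw1 w2 hw2 heq
      simp only [Finset.coe_erase, Set.mem_diff, Finset.mem_coe, Set.mem_singleton_iff] at hw1 hw2
      by_contra hne
      have hyL := hclosed z hz w1 hw1.1 (Ne.symm hw1.2)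
      have hyz : z ∩ w1 ⊂ z := (hss z hz _ hyL).2 Finset.inter_subset_left
      have hyw1 : z ∩ w1 ⊂ w1 := (hss w1 hw1.1 _ hyL).2 Finset.inter_subset_right
      have heq' : z ∩ w1 = z ∩ w2 := heq
      have hyw2 : z ∩ w1 ⊂ w2 := by
        rw [heq']; exact (hss w2 hw2.1 _ (heq' ▸ hyL)).2 Finset.inter_subset_right
      have hsub : ({z, w1, w2} : Finset (Finset N)) ⊆ precs Upper (z ∩ w1) := by
        intro b hb
        simp only [Finset.mem_insert, Finset.mem_singleton] at hb
        rcases hb with rfl | rfl | rfl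
        · exact hmemprec b hz _ hyz
        · exact hmemprec b hw1.1 _ hyw1
        · exact hmemprec b hw2.1 _ hyw2
      have hc3 : ({z, w1, w2} : Finset (Finset N)).card = 3 := by
        rw [Finset.card_insert_of_notMem (by simp [Ne.symm hw1.2, Ne.symm hw2.2]),
          Finset.card_insert_of_notMem (by simp [hne]), Finset.card_singleton]
      have := Finset.card_le_card hsub
      rw [hc3] at this
      have := h2 _ hyL
      omega
    by_cases hr2 : r = 2
    · subst hr2
      rw [hcard2 x hx, hcard2 x' hx']
    by_cases hr1 : r = 1
    · subst hr1
      have hsum : ∀ z ∈ Upper, (Lower.filter fun y => y ⊂ z).card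
          = nx Upper Lower z 1 + nx Upper Lower z 2 := by
        intro z hz
        have hsplit : (Lower.filter fun y => y ⊂ z)
            = Lower.filter fun y => fx Upper z y = 1 ∨ fx Upper z y = 2 := by
          apply Finset.filter_congr
          intro y hy
          constructor
          · intro h
            rw [hfx z y h]
            have := hpos z hz y h
            have := h2 y hy
            omega
          · rintro (h | h) <;>
            · by_contra hc
              rw [hfx0 z y hc] at h; omega
        rw [hsplit, Finset.filter_or]
        unfold nx
        rw [Finset.card_union_of_disjoint]
        rw [Finset.disjoint_left]
        intro y hy1 hy2
        have := (Finset.mem_filter.1 hy1).2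
        have := (Finset.mem_filter.1 hy2).2
        omega
      have e1 := hsum x hx
      have e2 := hsum x' hx'
      have e3 := hcard2 x hx
      have e4 := hcard2 x' hx'
      have e5 := hbal x hx x' hx'
      omega
    · -- r ≥ 3 : empty
      have hone : ∀ z ∈ Upper, (Lower.filter fun y => fx Upper z y = r) = ∅ := by
        intro z hz
        rw [Finset.filter_eq_empty_iff]
        intro y hy hv
        by_cases h : y ⊂ z
        · rw [hfx z y h] at hv
          have := hpos z hz y h
          have := h2 y hy
          omega
        · rw [hfx0 z y h] at hv; omega
      unfold nx
      rw [hone x hx, hone x' hx']
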